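/- Fix α ∈ (1/3, 1/2), φ(s) := |s|^{α-1} for s < 0, and let h(x,t) := ∫_{-2}^{t} φ(s) · ( (2/√π) ∫₀^{x/(2√(t-s))} e^{-y²} dy ) ds for x ≥ 0, t ∈ (-2,0). Define u(x,t) := (h(x₃,t), 0, 0) and p(x,t) := -φ(t)·x₁ on B⁺ × (-1, 0), where B⁺ := B(0,1) ∩ {x ∈ ℝ³ : x₃ > 0}. Then ∫_{-1}^{0} ∫_{B⁺} ( |u(x,t)|² + |∇u(x,t)|² ) dx dt < ∞ and ∫_{-1}^{0} ∫_{B⁺} |p(x,t)|^{3/2} dx dt < ∞, where |∇u(x,t)| = |∂_x h(x₃,t)|. -/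

import Mathlib

open Set Filter MeasureTheory intervalIntegral
open scoped ENNReal NNReal

noncomputable section

/-- ℝ³ as a Euclidean space. -/
abbrev E3 := EuclideanSpace ℝ (Fin 3)

/-- The error-function solution `Φ(x,t) = (2/√π) ∫₀^{x/(2√t)} e^{-y²} dy`. -/
def Phi (x t : ℝ) : ℝ :=
  (2 / Real.sqrt Real.pi) * ∫ y in (0 : ℝ)..(x / (2 * Real.sqrt t)), Real.exp (-y ^ 2)

/-- `h(x,t) = ∫_{-2}^t |s|^{α-1} Φ(x, t-s) ds`. -/
def heatSol (α x t : ℝ) : ℝ :=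
  ∫ s in (-2 : ℝ)..t, |s| ^ (α - 1) * Phi x (t - s)

/-- The half-ball `B⁺ = B(0,1) ∩ {x₃ > 0}`. -/
def BplusUnit : Set E3 := Metric.ball 0 1 ∩ {x : E3 | 0 < x 2}

/-- The half-cylinder `Q⁺ = B⁺ × (-1,0)`. -/
def QplusUnit : Set (E3 × ℝ) := BplusUnit ×ˢ (Ioo (-1 : ℝ) 0)

/-- The counterexample shear flow `u(x,t) = (h(x₃,t),0,0)`, `p(x,t) = -|t|^{α-1} x₁`
with `α ∈ (1/3, 1/2)` lies in the energy class: `∫_{Q⁺} (|u|² + |∇u|²) < ∞` (where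
`|∇u(x,t)| = |∂ₓ h(x₃,t)|`) and `∫_{Q⁺} |p|^{3/2} < ∞`. -/

lemma Phi_zero_right (x : ℝ) : Phi x 0 = 0 := by
  simp [Phi]

lemma Phi_zero_left (τ : ℝ) : Phi 0 τ = 0 := by
  simp [Phi]

lemma sqrt_inv_eq {τ : ℝ} (hτ : 0 ≤ τ) : (Real.sqrt τ)⁻¹ = τ ^ (-(2⁻¹ : ℝ)) := by
  rw [Real.rpow_neg hτ, Real.sqrt_eq_rpow]
  norm_num

lemma Phi_sub_le (x y τ : ℝ) (hτ : 0 ≤ τ) :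
    |Phi x τ - Phi y τ| ≤ (|x - y| / Real.sqrt Real.pi) * τ ^ (-(2⁻¹ : ℝ)) := by
  rcases eq_or_lt_of_le hτ with h0 | h0
  · simp only [← h0, Phi_zero_right, sub_zero, abs_zero,
      Real.zero_rpow (by norm_num : -(2⁻¹:ℝ) ≠ 0), mul_zero, le_refl]
  · have hs : 0 < Real.sqrt τ := Real.sqrt_pos.2 h0
    have hπ : 0 < Real.sqrt Real.pi := Real.sqrt_pos.2 Real.pi_pos
    have hc : ∀ c : ℝ, IntervalIntegrable (fun y => Real.exp (-y ^ 2)) volume 0 c :=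
      fun c => (Continuous.intervalIntegrable (by continuity) _ _)
    have hsub : Phi x τ - Phi y τ
        = (2 / Real.sqrt Real.pi) *
          ∫ z in (y / (2 * Real.sqrt τ))..(x / (2 * Real.sqrt τ)), Real.exp (-z ^ 2) := by
      rw [Phi, Phi, ← mul_sub, integral_interval_sub_left (hc _) (hc _)]
    rw [hsub, abs_mul]
    have hb : |∫ z in (y / (2 * Real.sqrt τ))..(x / (2 * Real.sqrt τ)), Real.exp (-z ^ 2)|
        ≤ 1 * |x / (2 * Real.sqrt τ) - y / (2 * Real.sqrt τ)| := by
      rw [← Real.norm_eq_abs]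
      apply intervalIntegral.norm_integral_le_of_norm_le_const
      intro z _
      rw [Real.norm_eq_abs, abs_of_pos (Real.exp_pos _)]
      exact Real.exp_le_one_iff.2 (neg_nonpos.2 (sq_nonneg z))
    calc |2 / Real.sqrt Real.pi| * |∫ z in _.._, Real.exp (-z^2)|
        ≤ (2 / Real.sqrt Real.pi) * (1 * |x / (2 * Real.sqrt τ) - y / (2 * Real.sqrt τ)|) := by
          rw [abs_of_pos (by positivity)]
          exact mul_le_mul_of_nonneg_left hb (by positivity)
      _ = (|x - y| / Real.sqrt Real.pi) * τ ^ (-(2⁻¹ : ℝ)) := by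
          rw [one_mul, div_sub_div_same, abs_div, abs_of_pos (by positivity : (0:ℝ) < 2 * Real.sqrt τ),
            ← sqrt_inv_eq hτ]
          rw [div_mul_div_comm, div_mul_eq_div_div]
          ring_nf

lemma rpow_kernel_int (t a b : ℝ) :
    IntervalIntegrable (fun s => (t - s) ^ (-(2⁻¹ : ℝ))) volume a b := by
  have h := (intervalIntegral.intervalIntegrable_rpow' (a := t - a) (b := t - b)
    (by norm_num : (-1:ℝ) < -(2⁻¹ : ℝ))).comp_sub_left t
  simpa using h

lemma Dker_intervalIntegrable {α t : ℝ} (hα : α - 1 ≤ 0) (ht : t < 0) {a : ℝ} (ha : a ≤ t) :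
    IntervalIntegrable (fun s => |s| ^ (α - 1) * (t - s) ^ (-(2⁻¹ : ℝ))) volume a t := by
  rw [intervalIntegrable_iff, uIoc_of_le ha, integrableOn_Ioc_iff_integrableOn_Ioo]
  have hg : IntegrableOn (fun s => (-t) ^ (α - 1) * (t - s) ^ (-(2⁻¹ : ℝ))) (Ioo a t) := by
    have h := (rpow_kernel_int t a t).const_mul ((-t) ^ (α - 1))
    rw [intervalIntegrable_iff, uIoc_of_le ha] at h
    exact h.mono_set Ioo_subset_Ioc_self
  refine hg.mono' ?_ ?_
  · refine ContinuousOn.aestronglyMeasurable ?_ measurableSet_Ioo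
    refine ContinuousOn.mul ?_ ?_
    · exact fun s hs => (continuous_abs.continuousAt.rpow_const
        (Or.inl (abs_ne_zero.2 (by linarith [hs.2] : s ≠ 0)))).continuousWithinAt
    · exact fun s hs => (((continuous_const.sub continuous_id).continuousAt).rpow_const
        (Or.inl (by show t - s ≠ 0; intro h; nlinarith [hs.2, sub_eq_zero.mp h]))).continuousWithinAt
  · filter_upwards [ae_restrict_mem measurableSet_Ioo] with s hs
    have hs0 : s < 0 := lt_trans hs.2 ht
    have h1 : |s| ^ (α - 1) ≤ (-t) ^ (α - 1) :=
      Real.rpow_le_rpow_of_nonpos (by linarith) (by rw [abs_of_nonpos hs0.le]; linarith [hs.2]) hα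
    have h2 : (0:ℝ) ≤ (t - s) ^ (-(2⁻¹ : ℝ)) := Real.rpow_nonneg (by linarith [hs.2]) _
    rw [Real.norm_eq_abs, abs_mul, abs_of_nonneg (Real.rpow_nonneg (abs_nonneg s) _),
      abs_of_nonneg h2]
    exact mul_le_mul_of_nonneg_right h1 h2

def Ccon (α : ℝ) : ℝ := 2 + Real.sqrt 2 * 2 ^ (α - 2⁻¹) / (2⁻¹ - α)

lemma Dker_integral_le {α t : ℝ} (hα1 : 1/3 < α) (hα2 : α < 1/2) (ht1 : -1 < t) (ht2 : t < 0) :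
    ∫ s in (-2:ℝ)..t, |s| ^ (α - 1) * (t - s) ^ (-(2⁻¹ : ℝ))
      ≤ Ccon α * (-t) ^ (α - 2⁻¹) := by
  have hαle : α - 1 ≤ 0 := by linarith
  have ht0 : (0:ℝ) < -t := by linarith
  have h2t : (-2:ℝ) ≤ 2*t := by linarith
  have h2tt : 2*t ≤ t := by linarith
  have hDall := Dker_intervalIntegrable hαle ht2 (by linarith : (-2:ℝ) ≤ t)
  have hsub1 : uIcc (-2:ℝ) (2*t) ⊆ uIcc (-2:ℝ) t := by
    rw [uIcc_of_le (by linarith), uIcc_of_le (by linarith)]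
    exact Icc_subset_Icc le_rfl h2tt
  have hsub2 : uIcc (2*t) t ⊆ uIcc (-2:ℝ) t := by
    rw [uIcc_of_le h2tt, uIcc_of_le (by linarith)]
    exact Icc_subset_Icc h2t le_rfl
  have hD1 := hDall.mono_set hsub1
  have hD2 := hDall.mono_set hsub2
  have hsplit :
      ∫ s in (-2:ℝ)..t, |s| ^ (α - 1) * (t - s) ^ (-(2⁻¹ : ℝ))
        = (∫ s in (-2:ℝ)..(2*t), |s| ^ (α - 1) * (t - s) ^ (-(2⁻¹ : ℝ)))
          + ∫ s in (2*t)..t, |s| ^ (α - 1) * (t - s) ^ (-(2⁻¹ : ℝ)) :=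
    (intervalIntegral.integral_add_adjacent_intervals hD1 hD2).symm
  -- second piece
  have hg2 : IntervalIntegrable (fun s => (-t) ^ (α-1) * (t - s) ^ (-(2⁻¹ : ℝ))) volume (2*t) t :=
    (rpow_kernel_int t (2*t) t).const_mul _
  have hb2 : (∫ s in (2*t)..t, |s| ^ (α - 1) * (t - s) ^ (-(2⁻¹ : ℝ)))
      ≤ ∫ s in (2*t)..t, (-t) ^ (α-1) * (t - s) ^ (-(2⁻¹ : ℝ)) := by
    apply intervalIntegral.integral_mono_on h2tt hD2 hg2
    intro s hs
    have hs0 : s ≤ 0 := le_trans hs.2 ht2.le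
    have h2 : (0:ℝ) ≤ (t - s) ^ (-(2⁻¹ : ℝ)) := Real.rpow_nonneg (by linarith [hs.2]) _
    refine mul_le_mul_of_nonneg_right ?_ h2
    exact Real.rpow_le_rpow_of_nonpos ht0 (by rw [abs_of_nonpos hs0]; linarith [hs.2]) hαle
  have heval2 : (∫ s in (2*t)..t, (-t) ^ (α-1) * (t - s) ^ (-(2⁻¹ : ℝ)))
      = 2 * (-t) ^ (α - 2⁻¹) := by
    rw [intervalIntegral.integral_const_mul,
      intervalIntegral.integral_comp_sub_left (fun u => u ^ (-(2⁻¹ : ℝ))) t]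
    rw [show t - t = (0:ℝ) by ring, show t - 2*t = -t by ring,
      integral_rpow (Or.inl (by norm_num : (-1:ℝ) < -(2⁻¹:ℝ)))]
    rw [Real.zero_rpow (by norm_num : (-(2⁻¹:ℝ)) + 1 ≠ 0),
      show (-(2⁻¹:ℝ)) + 1 = 2⁻¹ by norm_num, sub_zero, div_eq_mul_inv, inv_inv, ← mul_assoc,
      ← Real.rpow_add ht0, show α - 1 + 2⁻¹ = α - 2⁻¹ by ring, mul_comm]
  -- first piece
  have hg1 : IntervalIntegrable (fun s => Real.sqrt 2 * (-s) ^ (α - 2⁻¹ - 1)) volume (-2) (2*t) := by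
    have h0 : (0:ℝ) ∉ uIcc (-(2*t)) 2 := by
      rw [uIcc_of_le (by linarith)]
      intro h
      exact absurd h.1 (by linarith)
    have h := (intervalIntegrable_rpow (r := α - 2⁻¹ - 1) (a := -(2*t)) (b := 2)
        (μ := volume) (Or.inr h0))
    have h2 := ((IntervalIntegrable.iff_comp_neg (by simp)).mp h).symm
    simpa using h2.const_mul (Real.sqrt 2)
  have hb1 : (∫ s in (-2:ℝ)..(2*t), |s| ^ (α - 1) * (t - s) ^ (-(2⁻¹ : ℝ)))
      ≤ ∫ s in (-2:ℝ)..(2*t), Real.sqrt 2 * (-s) ^ (α - 2⁻¹ - 1) := by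
    apply intervalIntegral.integral_mono_on (by linarith) hD1 hg1
    intro s hs
    have hs0 : 0 < -s := by nlinarith [hs.2]
    have hts : 0 < -s/2 := by linarith
    have hts2 : -s/2 ≤ t - s := by nlinarith [hs.2]
    have step1 : (t - s) ^ (-(2⁻¹ : ℝ)) ≤ (-s/2) ^ (-(2⁻¹ : ℝ)) :=
      Real.rpow_le_rpow_of_nonpos hts hts2 (by norm_num)
    have step2 : (-s/2) ^ (-(2⁻¹ : ℝ)) = Real.sqrt 2 * (-s) ^ (-(2⁻¹ : ℝ)) := by
      rw [Real.div_rpow hs0.le (by norm_num : (0:ℝ) ≤ 2), Real.rpow_neg (by norm_num : (0:ℝ) ≤ 2),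
        div_eq_mul_inv, inv_inv, Real.sqrt_eq_rpow]
      norm_num
      ring
    have habs : |s| = -s := abs_of_nonpos (by linarith)
    calc |s| ^ (α - 1) * (t - s) ^ (-(2⁻¹ : ℝ))
        ≤ |s| ^ (α - 1) * (Real.sqrt 2 * (-s) ^ (-(2⁻¹ : ℝ))) := by
          rw [← step2]
          exact mul_le_mul_of_nonneg_left step1 (Real.rpow_nonneg (abs_nonneg s) _)
      _ = Real.sqrt 2 * (-s) ^ (α - 2⁻¹ - 1) := by
          rw [habs, mul_left_comm, ← Real.rpow_add hs0,
            show α - 1 + -(2⁻¹:ℝ) = α - 2⁻¹ - 1 by ring]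
  have heval1 : (∫ s in (-2:ℝ)..(2*t), Real.sqrt 2 * (-s) ^ (α - 2⁻¹ - 1))
      ≤ Real.sqrt 2 * 2 ^ (α - 2⁻¹) / (2⁻¹ - α) * (-t) ^ (α - 2⁻¹) := by
    rw [intervalIntegral.integral_const_mul,
      intervalIntegral.integral_comp_neg (fun u => u ^ (α - 2⁻¹ - 1))]
    have h0 : (0:ℝ) ∉ uIcc (-(2*t)) (-(-2:ℝ)) := by
      rw [neg_neg, uIcc_of_le (by linarith)]
      intro h
      exact absurd h.1 (by linarith)
    rw [integral_rpow (Or.inr ⟨by intro h; nlinarith [h], h0⟩)]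
    have e1 : α - 2⁻¹ - 1 + 1 = α - 2⁻¹ := by ring
    rw [e1, neg_neg]
    have hpos : 0 < 2⁻¹ - α := by linarith
    have hmul : (-(2*t)) ^ (α - 2⁻¹) = 2 ^ (α - 2⁻¹) * (-t) ^ (α - 2⁻¹) := by
      rw [show -(2*t) = 2 * (-t) by ring, Real.mul_rpow (by norm_num) ht0.le]
    have h2A : (0:ℝ) ≤ 2 ^ (α - 2⁻¹) := Real.rpow_nonneg (by norm_num) _
    have hrw : (2 ^ (α - 2⁻¹) - (-(2*t)) ^ (α - 2⁻¹)) / (α - 2⁻¹)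
        = ((-(2*t)) ^ (α - 2⁻¹) - 2 ^ (α - 2⁻¹)) / (2⁻¹ - α) := by
      rw [show (α - 2⁻¹:ℝ) = -(2⁻¹ - α) by ring, div_neg, ← neg_div, neg_sub]
    have key : (2 ^ (α - 2⁻¹) - (-(2*t)) ^ (α - 2⁻¹)) / (α - 2⁻¹)
        ≤ 2 ^ (α - 2⁻¹) * (-t) ^ (α - 2⁻¹) / (2⁻¹ - α) := by
      rw [hrw, hmul]
      gcongr
      linarith
    calc Real.sqrt 2 * ((2 ^ (α - 2⁻¹) - (-(2*t)) ^ (α - 2⁻¹)) / (α - 2⁻¹))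
        ≤ Real.sqrt 2 * (2 ^ (α - 2⁻¹) * (-t) ^ (α - 2⁻¹) / (2⁻¹ - α)) := by
          exact mul_le_mul_of_nonneg_left key (Real.sqrt_nonneg 2)
      _ = Real.sqrt 2 * 2 ^ (α - 2⁻¹) / (2⁻¹ - α) * (-t) ^ (α - 2⁻¹) := by ring
  rw [hsplit]
  calc _ ≤ (∫ s in (-2:ℝ)..(2*t), Real.sqrt 2 * (-s) ^ (α - 2⁻¹ - 1))
        + ∫ s in (2*t)..t, (-t) ^ (α-1) * (t - s) ^ (-(2⁻¹ : ℝ)) := add_le_add hb1 hb2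
    _ ≤ Real.sqrt 2 * 2 ^ (α - 2⁻¹) / (2⁻¹ - α) * (-t) ^ (α - 2⁻¹) + 2 * (-t) ^ (α - 2⁻¹) := by
        rw [heval2]
        exact add_le_add_left heval1 _
    _ = Ccon α * (-t) ^ (α - 2⁻¹) := by rw [Ccon]; ring

lemma gaussPrimitive_continuous :
    Continuous (fun c : ℝ => ∫ y in (0:ℝ)..c, Real.exp (-y ^ 2)) :=
  intervalIntegral.continuous_primitive
    (fun a b => Continuous.intervalIntegrable (by continuity) a b) 0

lemma heatSol_integrand_intInt {α t : ℝ} (hαle : α - 1 ≤ 0) (ht1 : -1 < t) (ht2 : t < 0)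
    (x : ℝ) :
    IntervalIntegrable (fun s => |s| ^ (α - 1) * Phi x (t - s)) volume (-2) t := by
  rw [intervalIntegrable_iff, uIoc_of_le (by linarith), integrableOn_Ioc_iff_integrableOn_Ioo]
  have hD := Dker_intervalIntegrable (α := α) hαle ht2 (by linarith : (-2:ℝ) ≤ t)
  have hg : IntegrableOn
      (fun s => (|x| / Real.sqrt Real.pi) * (|s| ^ (α - 1) * (t - s) ^ (-(2⁻¹ : ℝ))))
      (Ioo (-2) t) := by
    have h := hD.const_mul (|x| / Real.sqrt Real.pi)
    rw [intervalIntegrable_iff, uIoc_of_le (by linarith)] at h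
    exact h.mono_set Ioo_subset_Ioc_self
  refine hg.mono' ?_ ?_
  · refine ContinuousOn.aestronglyMeasurable (ContinuousOn.mul ?_ ?_) measurableSet_Ioo
    · exact fun s hs => (continuous_abs.continuousAt.rpow_const
        (Or.inl (abs_ne_zero.2 (by nlinarith [hs.2, hs.1] : s ≠ 0)))).continuousWithinAt
    · intro s hs
      have hts : 0 < t - s := by linarith [hs.2]
      have hden : (2 : ℝ) * Real.sqrt (t - s) ≠ 0 := by positivity
      have hc : ContinuousAt (fun s => x / (2 * Real.sqrt (t - s))) s := by
        apply ContinuousAt.div continuousAt_const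
        · exact (continuous_const.mul (Real.continuous_sqrt.comp
            (continuous_const.sub continuous_id))).continuousAt
        · exact hden
      have : ContinuousAt (fun s => Phi x (t - s)) s := by
        simp only [Phi]
        exact (continuousAt_const.mul ((gaussPrimitive_continuous.continuousAt).comp hc))
      exact this.continuousWithinAt
  · filter_upwards [ae_restrict_mem measurableSet_Ioo] with s hs
    have hts : (0:ℝ) ≤ t - s := by linarith [hs.2]
    have hb := Phi_sub_le x 0 (t - s) hts
    rw [Phi_zero_left, sub_zero, sub_zero] at hb
    rw [Real.norm_eq_abs, abs_mul, abs_of_nonneg (Real.rpow_nonneg (abs_nonneg s) _)]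
    calc |s| ^ (α - 1) * |Phi x (t - s)|
        ≤ |s| ^ (α - 1) * ((|x| / Real.sqrt Real.pi) * (t - s) ^ (-(2⁻¹ : ℝ))) :=
          mul_le_mul_of_nonneg_left hb (Real.rpow_nonneg (abs_nonneg s) _)
      _ = (|x| / Real.sqrt Real.pi) * (|s| ^ (α - 1) * (t - s) ^ (-(2⁻¹ : ℝ))) := by ring

lemma heatSol_lip {α t : ℝ} (hα1 : 1/3 < α) (hα2 : α < 1/2) (ht1 : -1 < t) (ht2 : t < 0)
    (x y : ℝ) :
    |heatSol α x t - heatSol α y t|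
      ≤ Ccon α / Real.sqrt Real.pi * (-t) ^ (α - 2⁻¹) * |x - y| := by
  have hαle : α - 1 ≤ 0 := by linarith
  have hix := heatSol_integrand_intInt hαle ht1 ht2 x
  have hiy := heatSol_integrand_intInt hαle ht1 ht2 y
  have hg : IntervalIntegrable
      (fun s => (|x - y| / Real.sqrt Real.pi) * (|s| ^ (α - 1) * (t - s) ^ (-(2⁻¹ : ℝ))))
      volume (-2) t :=
    (Dker_intervalIntegrable hαle ht2 (by linarith)).const_mul _
  have key : |∫ s in (-2:ℝ)..t, (|s| ^ (α - 1) * Phi x (t - s) - |s| ^ (α - 1) * Phi y (t - s))|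
      ≤ |∫ s in (-2:ℝ)..t,
          (|x - y| / Real.sqrt Real.pi) * (|s| ^ (α - 1) * (t - s) ^ (-(2⁻¹ : ℝ)))| := by
    rw [← Real.norm_eq_abs (∫ s in (-2:ℝ)..t, _)]
    apply intervalIntegral.norm_integral_le_abs_of_norm_le _ hg
    filter_upwards [ae_restrict_mem measurableSet_uIoc] with s hs
    rw [uIoc_of_le (by linarith : (-2:ℝ) ≤ t)] at hs
    have hts : (0:ℝ) ≤ t - s := by linarith [hs.2]
    have hb := Phi_sub_le x y (t - s) hts
    rw [Real.norm_eq_abs, ← mul_sub, abs_mul, abs_of_nonneg (Real.rpow_nonneg (abs_nonneg s) _)]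
    calc |s| ^ (α - 1) * |Phi x (t - s) - Phi y (t - s)|
        ≤ |s| ^ (α - 1) * ((|x - y| / Real.sqrt Real.pi) * (t - s) ^ (-(2⁻¹ : ℝ))) :=
          mul_le_mul_of_nonneg_left hb (Real.rpow_nonneg (abs_nonneg s) _)
      _ = (|x - y| / Real.sqrt Real.pi) * (|s| ^ (α - 1) * (t - s) ^ (-(2⁻¹ : ℝ))) := by ring
  have hJ0 : 0 ≤ ∫ s in (-2:ℝ)..t, |s| ^ (α - 1) * (t - s) ^ (-(2⁻¹ : ℝ)) := by
    apply intervalIntegral.integral_nonneg (by linarith : (-2:ℝ) ≤ t)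
    intro s hs
    exact mul_nonneg (Real.rpow_nonneg (abs_nonneg s) _)
      (Real.rpow_nonneg (by linarith [hs.2] : (0:ℝ) ≤ t - s) _)
  rw [heatSol, heatSol, ← intervalIntegral.integral_sub hix hiy]
  apply key.trans
  rw [intervalIntegral.integral_const_mul, abs_mul,
    abs_of_nonneg (div_nonneg (abs_nonneg (x - y)) (Real.sqrt_nonneg _)), abs_of_nonneg hJ0]
  calc |x - y| / Real.sqrt Real.pi * ∫ s in (-2:ℝ)..t, |s| ^ (α - 1) * (t - s) ^ (-(2⁻¹ : ℝ))
      ≤ |x - y| / Real.sqrt Real.pi * (Ccon α * (-t) ^ (α - 2⁻¹)) :=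
        mul_le_mul_of_nonneg_left (Dker_integral_le hα1 hα2 ht1 ht2) (by positivity)
    _ = Ccon α / Real.sqrt Real.pi * (-t) ^ (α - 2⁻¹) * |x - y| := by ring

lemma heatSol_zero {α t : ℝ} : heatSol α 0 t = 0 := by
  simp [heatSol, Phi_zero_left]

lemma abs_deriv_le_of_lip {f : ℝ → ℝ} {K : ℝ} (hK : 0 ≤ K)
    (hl : ∀ x y, |f x - f y| ≤ K * |x - y|) (x : ℝ) : |deriv f x| ≤ K := by
  have hlip : LipschitzWith (Real.toNNReal K) f := by
    apply LipschitzWith.of_dist_le_mul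
    intro a b
    rw [Real.dist_eq, Real.dist_eq, Real.coe_toNNReal K hK]
    exact hl a b
  by_cases hd : DifferentiableAt ℝ f x
  · have h1 : ‖fderiv ℝ f x‖ ≤ K := by
      have := hd.hasFDerivAt.le_of_lipschitz hlip
      simpa [Real.coe_toNNReal K hK] using this
    calc |deriv f x| = ‖(fderiv ℝ f x) 1‖ := by rw [fderiv_apply_one_eq_deriv, Real.norm_eq_abs]
      _ ≤ ‖fderiv ℝ f x‖ * ‖(1:ℝ)‖ := (fderiv ℝ f x).le_opNorm 1
      _ ≤ K := by simpa using h1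
  · rw [deriv_zero_of_not_differentiableAt hd]
    simpa using hK

lemma Ccon_nonneg {α : ℝ} (hα2 : α < 1/2) : 0 ≤ Ccon α := by
  rw [Ccon]
  have h : (0:ℝ) < 2⁻¹ - α := by linarith
  have := Real.rpow_nonneg (by norm_num : (0:ℝ) ≤ 2) (α - 2⁻¹)
  positivity

lemma deriv_heatSol_le {α t : ℝ} (hα1 : 1/3 < α) (hα2 : α < 1/2) (ht1 : -1 < t) (ht2 : t < 0)
    (x : ℝ) :
    |deriv (fun y => heatSol α y t) x| ≤ Ccon α / Real.sqrt Real.pi * (-t) ^ (α - 2⁻¹) := by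
  refine abs_deriv_le_of_lip ?_ (fun a b => heatSol_lip hα1 hα2 ht1 ht2 a b) x
  have h1 := Ccon_nonneg hα2
  have h2 := Real.sqrt_nonneg Real.pi
  have h3 := Real.rpow_nonneg (by linarith : (0:ℝ) ≤ -t) (α - 2⁻¹)
  positivity

lemma heatSol_abs_le {α t : ℝ} (hα1 : 1/3 < α) (hα2 : α < 1/2) (ht1 : -1 < t) (ht2 : t < 0)
    {x : ℝ} (hx : |x| ≤ 1) :
    |heatSol α x t| ≤ Ccon α / Real.sqrt Real.pi * (-t) ^ (α - 2⁻¹) := by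
  have h := heatSol_lip hα1 hα2 ht1 ht2 x 0
  rw [heatSol_zero, sub_zero, sub_zero] at h
  refine h.trans ?_
  have h1 := Ccon_nonneg hα2
  have h3 := Real.rpow_nonneg (by linarith : (0:ℝ) ≤ -t) (α - 2⁻¹)
  have hc : (0:ℝ) ≤ Ccon α / Real.sqrt Real.pi * (-t) ^ (α - 2⁻¹) := by positivity
  calc Ccon α / Real.sqrt Real.pi * (-t) ^ (α - 2⁻¹) * |x|
      ≤ Ccon α / Real.sqrt Real.pi * (-t) ^ (α - 2⁻¹) * 1 := mul_le_mul_of_nonneg_left hx hc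
    _ = _ := mul_one _

lemma coord_le_norm (x : E3) (i : Fin 3) : |x i| ≤ ‖x‖ := by
  rw [EuclideanSpace.norm_eq, ← Real.sqrt_sq_eq_abs]
  apply Real.sqrt_le_sqrt
  have := Finset.single_le_sum (f := fun j => ‖x j‖ ^ 2) (fun j _ => sq_nonneg _)
    (Finset.mem_univ i)
  simpa [Real.norm_eq_abs, sq_abs] using this

lemma abs_rpow_integrableOn {r : ℝ} (hr : -1 < r) :
    IntegrableOn (fun τ : ℝ => |τ| ^ r) (Ioo (-1:ℝ) 0) := by
  have h1 : IntervalIntegrable (fun u : ℝ => u ^ r) volume 0 1 :=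
    intervalIntegral.intervalIntegrable_rpow' hr
  have h2 := ((IntervalIntegrable.iff_comp_neg (by simp)).mp h1).symm
  rw [intervalIntegrable_iff] at h2
  simp only [neg_zero, neg_neg] at h2
  rw [uIoc_of_le (by norm_num : (-1:ℝ) ≤ 0)] at h2
  have h3 : IntegrableOn (fun x : ℝ => (-x) ^ r) (Ioo (-1:ℝ) 0) :=
    h2.mono_set Ioo_subset_Ioc_self
  refine h3.congr_fun ?_ measurableSet_Ioo
  intro τ hτ
  simp only
  rw [abs_of_nonpos (le_of_lt hτ.2)]

lemma measurableSet_Qplus : MeasurableSet QplusUnit := by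
  refine MeasurableSet.prod (MeasurableSet.inter measurableSet_ball ?_) measurableSet_Ioo
  have hc : Continuous fun x : E3 => x 2 := (EuclideanSpace.proj (2 : Fin 3)).continuous
  exact measurableSet_lt measurable_const hc.measurable

lemma lintegral_Q_lt_top {G : ℝ → ℝ} (hGi : IntegrableOn G (Ioo (-1:ℝ) 0)) :
    (∫⁻ z in QplusUnit, ENNReal.ofReal (G z.2)) < ⊤ := by
  have hfin : (∫⁻ τ in Ioo (-1:ℝ) 0, ENNReal.ofReal (G τ)) < ⊤ :=
    Integrable.lintegral_lt_top hGi
  rw [QplusUnit, Measure.volume_eq_prod, ← Measure.prod_restrict]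
  have hG : AEMeasurable G (volume.restrict (Ioo (-1:ℝ) 0)) := hGi.aemeasurable
  have h1 : AEMeasurable (fun τ => ENNReal.ofReal (G τ)) (volume.restrict (Ioo (-1:ℝ) 0)) :=
    ENNReal.measurable_ofReal.comp_aemeasurable hG
  have hmeas : AEMeasurable (fun z : E3 × ℝ => ENNReal.ofReal (G z.2))
      ((volume.restrict BplusUnit).prod (volume.restrict (Ioo (-1:ℝ) 0))) := by
    have h2 : AEMeasurable (fun τ => ENNReal.ofReal (G τ))
        (Measure.map Prod.snd
          ((volume.restrict BplusUnit).prod (volume.restrict (Ioo (-1:ℝ) 0)))) := by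
      rw [Measure.map_snd_prod]
      exact h1.smul_measure _
    exact h2.comp_measurable measurable_snd
  rw [MeasureTheory.lintegral_prod _ hmeas]
  simp only
  rw [lintegral_const, Measure.restrict_apply_univ]
  refine ENNReal.mul_lt_top hfin ?_
  exact lt_of_le_of_lt (measure_mono inter_subset_left) measure_ball_lt_top

theorem counterexample_in_energy_class (α : ℝ) (hα : α ∈ Ioo (1 / 3 : ℝ) (1 / 2))
    (u : E3 × ℝ → E3) (p : E3 × ℝ → ℝ)
    (hu : ∀ z : E3 × ℝ, u z = heatSol α (z.1 2) z.2 • (EuclideanSpace.single 0 1 : E3))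
    (hp : ∀ z : E3 × ℝ, p z = -(|z.2| ^ (α - 1)) * z.1 0) :
    (∫⁻ z in QplusUnit,
        ENNReal.ofReal (‖u z‖ ^ 2 + (deriv (fun y => heatSol α y z.2) (z.1 2)) ^ 2)) < ⊤ ∧
    (∫⁻ z in QplusUnit, ENNReal.ofReal (|p z| ^ (3 / 2 : ℝ))) < ⊤ := by
  obtain ⟨hα1, hα2⟩ := hα
  constructor
  · set C : ℝ := 2 * (Ccon α / Real.sqrt Real.pi) ^ 2 with hC
    have hG1 : IntegrableOn (fun τ : ℝ => C * |τ| ^ (2 * α - 1)) (Ioo (-1:ℝ) 0) :=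
      (abs_rpow_integrableOn (by linarith : (-1:ℝ) < 2 * α - 1)).const_mul C
    refine lt_of_le_of_lt (setLIntegral_mono' measurableSet_Qplus ?_) (lintegral_Q_lt_top hG1)
    rintro z ⟨hzB, hzT⟩
    have ht1 : -1 < z.2 := hzT.1
    have ht2 : z.2 < 0 := hzT.2
    have ht0 : (0:ℝ) < -z.2 := by linarith
    have hx1 : |z.1 2| ≤ 1 :=
      le_of_lt (lt_of_le_of_lt (coord_le_norm _ _) (mem_ball_zero_iff.mp hzB.1))
    set M : ℝ := Ccon α / Real.sqrt Real.pi * (-z.2) ^ (α - 2⁻¹) with hM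
    have hM0 : 0 ≤ M := by
      have h1 := Ccon_nonneg hα2
      have h3 := Real.rpow_nonneg ht0.le (α - 2⁻¹)
      positivity
    have hnu : ‖u z‖ = |heatSol α (z.1 2) z.2| := by
      rw [hu z, norm_smul, EuclideanSpace.norm_single, norm_one, mul_one, Real.norm_eq_abs]
    have h1 : ‖u z‖ ^ 2 ≤ M ^ 2 := by
      rw [hnu]
      exact pow_le_pow_left₀ (abs_nonneg _) (heatSol_abs_le hα1 hα2 ht1 ht2 hx1) 2
    have h2 : (deriv (fun y => heatSol α y z.2) (z.1 2)) ^ 2 ≤ M ^ 2 := by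
      rw [← sq_abs]
      exact pow_le_pow_left₀ (abs_nonneg _) (deriv_heatSol_le hα1 hα2 ht1 ht2 _) 2
    apply ENNReal.ofReal_le_ofReal
    have hMsq : M ^ 2 = (Ccon α / Real.sqrt Real.pi) ^ 2 * |z.2| ^ (2 * α - 1) := by
      rw [hM, mul_pow, abs_of_neg ht2, sq ((-z.2) ^ (α - 2⁻¹)), ← Real.rpow_add ht0,
        show α - 2⁻¹ + (α - 2⁻¹) = 2 * α - 1 by ring]
    calc ‖u z‖ ^ 2 + (deriv (fun y => heatSol α y z.2) (z.1 2)) ^ 2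
        ≤ M ^ 2 + M ^ 2 := add_le_add h1 h2
      _ = C * |z.2| ^ (2 * α - 1) := by rw [hMsq, hC]; ring
  · have hG2 : IntegrableOn (fun τ : ℝ => |τ| ^ ((α - 1) * (3 / 2))) (Ioo (-1:ℝ) 0) :=
      abs_rpow_integrableOn (by nlinarith : (-1:ℝ) < (α - 1) * (3 / 2))
    refine lt_of_le_of_lt (setLIntegral_mono' measurableSet_Qplus ?_) (lintegral_Q_lt_top hG2)
    rintro z ⟨hzB, hzT⟩
    have ht2 : z.2 < 0 := hzT.2
    have hx1 : |z.1 0| ≤ 1 :=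
      le_of_lt (lt_of_le_of_lt (coord_le_norm _ _) (mem_ball_zero_iff.mp hzB.1))
    apply ENNReal.ofReal_le_ofReal
    have hpz : |p z| ≤ |z.2| ^ (α - 1) := by
      rw [hp z, abs_mul, abs_neg, abs_of_nonneg (Real.rpow_nonneg (abs_nonneg _) _)]
      exact mul_le_of_le_one_right (Real.rpow_nonneg (abs_nonneg _) _) hx1
    calc |p z| ^ (3 / 2 : ℝ)
        ≤ (|z.2| ^ (α - 1)) ^ (3 / 2 : ℝ) :=
          Real.rpow_le_rpow (abs_nonneg _) hpz (by norm_num)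
      _ = |z.2| ^ ((α - 1) * (3 / 2)) := (Real.rpow_mul (abs_nonneg _) _ _).symm
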